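/- Let n ≥ 2 be an integer, let p be an odd prime, and let a₁,…,a_n, b₁,…,b_n ∈ 𝔽̄_p be such that the polynomial F(X,Y) = ∏_{i=1}^n (X + a_iY + b_i) ∈ 𝔽̄_p[X,Y] is squarefree (equivalently, the n linear factors are pairwise distinct) and a_i ≠ a₁ for some i ∈ {2,…,n}. Then for every s ∈ 𝔽̄_p, for all but at most n² values of c ∈ 𝔽̄_p, the one-variable polynomial F(X, sX + c) ∈ 𝔽̄_p[X] is nonzero, of degree at least 1, and squarefree. -/

import Mathlib

set_option maxHeartbeats 1000000

open Polynomial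

/-- Key lemma: a product of linear/constant polynomials `C (u i) * X + C (v i)` over a field
is nonzero, of degree ≥ 1, and squarefree, provided constant factors are nonzero, linear
factors are pairwise non-proportional, and at least one factor is linear. -/
lemma key_lemma {F : Type*} [Field F] {n : ℕ} (u v : Fin n → F)
    (hu : ∀ i, u i = 0 → v i ≠ 0)
    (hcp : ∀ i j, i ≠ j → u i ≠ 0 → u j ≠ 0 → v i * u j ≠ v j * u i)
    (hex : ∃ i, u i ≠ 0) :
    (∏ i, (Polynomial.C (u i) * Polynomial.X + Polynomial.C (v i))) ≠ 0 ∧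
    1 ≤ (∏ i, (Polynomial.C (u i) * Polynomial.X + Polynomial.C (v i))).natDegree ∧
    Squarefree (∏ i, (Polynomial.C (u i) * Polynomial.X + Polynomial.C (v i))) := by
  set f : Fin n → F[X] := fun i => Polynomial.C (u i) * Polynomial.X + Polynomial.C (v i) with hf
  have hne : ∀ i, f i ≠ 0 := by
    intro i
    rcases eq_or_ne (u i) 0 with h | h
    · simp only [hf, h, map_zero, zero_mul, zero_add]
      simpa using hu i h
    · intro hz
      have := congrArg (fun q => Polynomial.coeff q 1) hz
      simp [hf] at this
      exact h this
  have hdeg : ∀ i, u i ≠ 0 → (f i).natDegree = 1 := fun i h => Polynomial.natDegree_linear h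
  -- nonzero
  have h0 : (∏ i, f i) ≠ 0 := Finset.prod_ne_zero_iff.mpr fun i _ => hne i
  refine ⟨h0, ?_, ?_⟩
  · -- degree at least 1
    obtain ⟨i₀, hi₀⟩ := hex
    rw [Polynomial.natDegree_prod _ _ fun i _ => hne i]
    calc 1 = (f i₀).natDegree := (hdeg i₀ hi₀).symm
      _ ≤ ∑ i, (f i).natDegree :=
        Finset.single_le_sum (f := fun i => (f i).natDegree)
          (fun i _ => Nat.zero_le _) (Finset.mem_univ i₀)
  · -- squarefree via separability
    have sep : ∀ i, (f i).Separable := by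
      intro i
      rcases eq_or_ne (u i) 0 with h | h
      · simp only [hf, h, map_zero, zero_mul, zero_add]
        exact (Polynomial.separable_C _).mpr (isUnit_iff_ne_zero.mpr (hu i h))
      · have hder : Polynomial.derivative (f i) = Polynomial.C (u i) := by simp [hf]
        rw [Polynomial.Separable, hder]
        exact ⟨0, Polynomial.C (u i)⁻¹, by
          rw [zero_mul, zero_add, ← Polynomial.C_mul, inv_mul_cancel₀ h, Polynomial.C_1]⟩
    have pw : Pairwise (Function.onFun IsCoprime f) := by
      intro i j hij
      simp only [Function.onFun, hf]
      rcases eq_or_ne (u i) 0 with hi | hi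
      · refine ⟨Polynomial.C (v i)⁻¹, 0, ?_⟩
        rw [hi]
        simp [← Polynomial.C_mul, inv_mul_cancel₀ (hu i hi)]
      rcases eq_or_ne (u j) 0 with hj | hj
      · refine ⟨0, Polynomial.C (v j)⁻¹, ?_⟩
        rw [hj]
        simp [← Polynomial.C_mul, inv_mul_cancel₀ (hu j hj)]
      · set d : F := v i * u j - v j * u i with hd
        have hdne : d ≠ 0 := sub_ne_zero.mpr (hcp i j hij hi hj)
        refine ⟨Polynomial.C (u j * d⁻¹), Polynomial.C (-(u i) * d⁻¹), ?_⟩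
        have h1 : u j * d⁻¹ * u i + -(u i) * d⁻¹ * u j = 0 := by ring
        have h2 : u j * d⁻¹ * v i + -(u i) * d⁻¹ * v j = 1 := by
          rw [show u j * d⁻¹ * v i + -(u i) * d⁻¹ * v j = d⁻¹ * (v i * u j - v j * u i) by ring,
            ← hd]
          exact inv_mul_cancel₀ hdne
        calc Polynomial.C (u j * d⁻¹) * (Polynomial.C (u i) * Polynomial.X + Polynomial.C (v i))
              + Polynomial.C (-(u i) * d⁻¹) *
                (Polynomial.C (u j) * Polynomial.X + Polynomial.C (v j))
            = Polynomial.C (u j * d⁻¹ * u i + -(u i) * d⁻¹ * u j) * Polynomial.X +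
              Polynomial.C (u j * d⁻¹ * v i + -(u i) * d⁻¹ * v j) := by
              simp only [Polynomial.C_add, Polynomial.C_mul, Polynomial.C_neg]; ring
          _ = 1 := by rw [h1, h2]; simp
    exact (Polynomial.separable_prod pw sep).squarefree

/-- Let `n ≥ 2`, let `p` be an odd prime, and let `a_i, b_i ∈ 𝔽̄_p` be such
that `F(X,Y) = ∏_{i=1}^n (X + a_iY + b_i)` is squarefree and `a_i ≠ a₁` for some `i`. Then for
every `s ∈ 𝔽̄_p`, for all but at most `n²` values of `c ∈ 𝔽̄_p`, the one-variable polynomial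
`F(X, sX + c)` is nonzero, of degree at least `1`, and squarefree. -/
theorem stmt18 (n : ℕ) (hn : 2 ≤ n) (p : ℕ) [Fact p.Prime] (hp : Odd p)
    (a b : Fin n → AlgebraicClosure (ZMod p))
    (hsf : Squarefree (∏ i : Fin n,
      (MvPolynomial.X 0 + MvPolynomial.C (a i) * MvPolynomial.X 1 + MvPolynomial.C (b i) :
        MvPolynomial (Fin 2) (AlgebraicClosure (ZMod p)))))
    (ha : ∃ i : Fin n, a i ≠ a ⟨0, by omega⟩) :
    ∀ s : AlgebraicClosure (ZMod p),
      ∃ S : Finset (AlgebraicClosure (ZMod p)), S.card ≤ n ^ 2 ∧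
        ∀ c : AlgebraicClosure (ZMod p), c ∉ S →
          (MvPolynomial.aeval
              ![(Polynomial.X : Polynomial (AlgebraicClosure (ZMod p))),
                Polynomial.C s * Polynomial.X + Polynomial.C c]
              (∏ i : Fin n,
                (MvPolynomial.X 0 + MvPolynomial.C (a i) * MvPolynomial.X 1 +
                  MvPolynomial.C (b i))) ≠ 0) ∧
          (1 ≤ (MvPolynomial.aeval
              ![(Polynomial.X : Polynomial (AlgebraicClosure (ZMod p))),
                Polynomial.C s * Polynomial.X + Polynomial.C c]
              (∏ i : Fin n,
                (MvPolynomial.X 0 + MvPolynomial.C (a i) * MvPolynomial.X 1 +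
                  MvPolynomial.C (b i)))).natDegree) ∧
          Squarefree (MvPolynomial.aeval
              ![(Polynomial.X : Polynomial (AlgebraicClosure (ZMod p))),
                Polynomial.C s * Polynomial.X + Polynomial.C c]
              (∏ i : Fin n,
                (MvPolynomial.X 0 + MvPolynomial.C (a i) * MvPolynomial.X 1 +
                  MvPolynomial.C (b i)))) := by
  classical
  -- distinctness of the factors
  have hdist : ∀ i j : Fin n, i ≠ j → a i = a j → b i ≠ b j := by
    intro i j hij hab hb
    set L : MvPolynomial (Fin 2) (AlgebraicClosure (ZMod p)) :=
      MvPolynomial.X 0 + MvPolynomial.C (a i) * MvPolynomial.X 1 + MvPolynomial.C (b i) with hL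
    have hdvd : L * L ∣ ∏ k : Fin n,
        (MvPolynomial.X 0 + MvPolynomial.C (a k) * MvPolynomial.X 1 + MvPolynomial.C (b k)) := by
      rw [← Finset.mul_prod_erase Finset.univ _ (Finset.mem_univ i),
        ← Finset.mul_prod_erase _ _ (Finset.mem_erase.mpr ⟨hij.symm, Finset.mem_univ j⟩)]
      rw [← hab, ← hb, ← hL]
      exact ⟨∏ k ∈ (Finset.univ.erase i).erase j,
        (MvPolynomial.X 0 + MvPolynomial.C (a k) * MvPolynomial.X 1 + MvPolynomial.C (b k)),
        by ring⟩
    have hunit := hsf L hdvd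
    have hunit2 := hunit.map (MvPolynomial.aeval
      ![(Polynomial.X : Polynomial (AlgebraicClosure (ZMod p))), 0] :
        MvPolynomial (Fin 2) (AlgebraicClosure (ZMod p)) →ₐ[AlgebraicClosure (ZMod p)]
          Polynomial (AlgebraicClosure (ZMod p)))
    have : (MvPolynomial.aeval ![(Polynomial.X : Polynomial (AlgebraicClosure (ZMod p))), 0]) L
        = Polynomial.X + Polynomial.C (b i) := by
      simp [hL, Polynomial.algebraMap_eq]
    rw [this] at hunit2
    exact Polynomial.not_isUnit_of_natDegree_pos _
      (by rw [Polynomial.natDegree_X_add_C]; omega) hunit2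
  intro s
  set g : Fin n × Fin n → AlgebraicClosure (ZMod p) := fun q =>
    if q.1 = q.2 then -b q.1 / a q.1
    else (b q.2 * (1 + a q.1 * s) - b q.1 * (1 + a q.2 * s)) / (a q.1 - a q.2) with hg
  refine ⟨Finset.univ.image g, ?_, ?_⟩
  · calc (Finset.univ.image g).card ≤ (Finset.univ : Finset (Fin n × Fin n)).card :=
        Finset.card_image_le
      _ = n ^ 2 := by simp [sq]
  intro c hc
  -- the three conditions of the key lemma
  have hu0 : ∀ i : Fin n, (1 + a i * s) = 0 → (a i * c + b i) ≠ 0 := by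
    intro i hui hvi
    have hai : a i ≠ 0 := by
      intro h; rw [h] at hui; simp at hui
    have hcval : c = -b i / a i := by
      rw [eq_div_iff hai]; linear_combination hvi
    refine hc (Finset.mem_image.mpr ⟨(i, i), Finset.mem_univ _, ?_⟩)
    simp [hg, hcval]
  have hcp : ∀ i j : Fin n, i ≠ j → (1 + a i * s) ≠ 0 → (1 + a j * s) ≠ 0 →
      (a i * c + b i) * (1 + a j * s) ≠ (a j * c + b j) * (1 + a i * s) := by
    intro i j hij hi hj heq
    have key2 : c * (a i - a j) = b j * (1 + a i * s) - b i * (1 + a j * s) := by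
      linear_combination heq
    by_cases hij2 : a i = a j
    · rw [hij2] at key2 hi
      have h5 : (b j - b i) * (1 + a j * s) = 0 := by linear_combination -key2
      rcases mul_eq_zero.mp h5 with h6 | h6
      · exact hdist i j hij hij2 (sub_eq_zero.mp h6).symm
      · exact hi h6
    · have hcval : c = (b j * (1 + a i * s) - b i * (1 + a j * s)) / (a i - a j) := by
        rw [eq_div_iff (sub_ne_zero.mpr hij2)]; linear_combination key2
      refine hc (Finset.mem_image.mpr ⟨(i, j), Finset.mem_univ _, ?_⟩)
      simp only [hg, if_neg hij]
      exact hcval.symm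
  have hex : ∃ i : Fin n, (1 + a i * s) ≠ 0 := by
    by_contra h
    push_neg at h
    obtain ⟨i, hi⟩ := ha
    have hs : s ≠ 0 := by
      intro h0
      have := h ⟨0, by omega⟩
      rw [h0] at this; simp at this
    have : (a i - a ⟨0, by omega⟩) * s = 0 := by
      linear_combination h i - h ⟨0, by omega⟩
    rcases mul_eq_zero.mp this with h6 | h6
    · exact hi (sub_eq_zero.mp h6)
    · exact hs h6
  have hfact : (MvPolynomial.aeval
      ![(Polynomial.X : Polynomial (AlgebraicClosure (ZMod p))),
        Polynomial.C s * Polynomial.X + Polynomial.C c])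
      (∏ i : Fin n, (MvPolynomial.X 0 + MvPolynomial.C (a i) * MvPolynomial.X 1 +
        MvPolynomial.C (b i)))
      = ∏ i : Fin n, (Polynomial.C (1 + a i * s) * Polynomial.X +
          Polynomial.C (a i * c + b i)) := by
    rw [map_prod]
    refine Finset.prod_congr rfl fun i _ => ?_
    simp only [map_add, map_mul, MvPolynomial.aeval_X, MvPolynomial.aeval_C,
      Matrix.cons_val_zero, Matrix.cons_val_one, Matrix.head_cons, Polynomial.algebraMap_eq]
    simp only [Polynomial.C_add, Polynomial.C_mul, Polynomial.C_1]
    ring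
  rw [hfact]
  exact key_lemma (fun i => 1 + a i * s) (fun i => a i * c + b i) hu0 hcp hex
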